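/- Let G be a graph that is \widehat{P}_3-free and K_4-free, in which every edge lies in at least one triangle. Then every triangle block of G is a book B_s (s triangles all sharing one common edge) for some s \ge 1. Consequently, t(G) < e(G)/2. -/

import Mathlib

open SimpleGraph

/-- `G` contains a copy of `H` (a subgraph isomorphic to `H`). -/
def containsCopy {W V : Type*} (H : SimpleGraph W) (G : SimpleGraph V) : Prop :=
  ∃ f : H →g G, Function.Injective f

/-- The number of triangles of `G`. -/
noncomputable def triCount {V : Type*} (G : SimpleGraph V) : ℕ :=
  {s : Finset V | G.IsNClique 3 s}.ncard

/-- The number of edges of `G`. -/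
noncomputable def edgeCount {V : Type*} (G : SimpleGraph V) : ℕ :=
  G.edgeSet.ncard

/-- The suspension `K_1 ∨ H` of a graph `H`: a new vertex (`none`) joined to all
vertices of `H`. -/
def susp {W : Type*} (H : SimpleGraph W) : SimpleGraph (Option W) where
  Adj a b :=
    match a, b with
    | some x, some y => H.Adj x y
    | some _, none => True
    | none, some _ => True
    | none, none => False
  symm := ⟨by
    rintro (_ | x) (_ | y) h
    · exact h
    · trivial
    · trivial
    · exact h.symm⟩
  loopless := ⟨by
    rintro (_ | x) h
    · exact h
    · exact H.loopless.irrefl x h⟩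

/-- The Turán number: maximum number of edges of an `H`-free graph on `n` vertices. -/
noncomputable def exNum (n : ℕ) {W : Type*} (H : SimpleGraph W) : ℕ :=
  sSup {m | ∃ G : SimpleGraph (Fin n), ¬ containsCopy H G ∧ edgeCount G = m}

/-- The codegree of the pair `a, b`: number of common neighbours. -/
noncomputable def codeg {V : Type*} (G : SimpleGraph V) (a b : V) : ℕ :=
  (G.neighborSet a ∩ G.neighborSet b).ncard

/-- Two edges lie in a common triangle of `G`. -/
def triShare {V : Type*} (G : SimpleGraph V) (e e' : Sym2 V) : Prop :=
  ∃ t : Finset V, G.IsNClique 3 t ∧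
    (∃ x ∈ t, ∃ y ∈ t, x ≠ y ∧ e = s(x, y)) ∧
    (∃ x ∈ t, ∃ y ∈ t, x ≠ y ∧ e' = s(x, y))

section Helpers
variable {V : Type*} {G : SimpleGraph V}

lemma triShare_symm : Symmetric (triShare G) := by
  rintro e e' ⟨t, ht, hh1, hh2⟩; exact ⟨t, ht, hh2, hh1⟩

lemma comp_congr {g g' : Sym2 V}
    (h : g' ∈ {e' | e' ∈ G.edgeSet ∧ Relation.ReflTransGen (triShare G) g e'}) :
    {e' | e' ∈ G.edgeSet ∧ Relation.ReflTransGen (triShare G) g' e'} =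
      {e' | e' ∈ G.edgeSet ∧ Relation.ReflTransGen (triShare G) g e'} := by
  obtain ⟨hE, hR⟩ := h
  ext x
  constructor
  · rintro ⟨hx, hr⟩; exact ⟨hx, hR.trans hr⟩
  · rintro ⟨hx, hr⟩
    exact ⟨hx, ((by haveI : Std.Symm (triShare G) := ⟨fun a b h => triShare_symm h⟩; exact Std.Symm.symm _ _ hR) : Relation.ReflTransGen (triShare G) g' g).trans hr⟩

lemma tri_struct [DecidableEq V] {t : Finset V} (ht : G.IsNClique 3 t) {u v : V}
    (hu : u ∈ t) (hv : v ∈ t) (huv : u ≠ v) :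
    ∃ w, w ≠ u ∧ w ≠ v ∧ t = {u, v, w} ∧ G.Adj u v ∧ G.Adj u w ∧ G.Adj v w := by
  have hc := ht.2
  have hns : ¬ t ⊆ {u, v} := by
    intro h
    have := Finset.card_le_card h
    have h2 : ({u, v} : Finset V).card = 2 := Finset.card_pair huv
    omega
  obtain ⟨w, hwt, hw⟩ := Finset.not_subset.1 hns
  simp only [Finset.mem_insert, Finset.mem_singleton, not_or] at hw
  have hsub : ({u, v, w} : Finset V) ⊆ t := by
    intro x hx
    rcases Finset.mem_insert.1 hx with rfl | hx
    · exact hu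
    rcases Finset.mem_insert.1 hx with rfl | hx
    · exact hv
    · rwa [Finset.mem_singleton.1 hx]
  have hcard3 : ({u, v, w} : Finset V).card = 3 := by
    rw [Finset.card_insert_of_notMem, Finset.card_insert_of_notMem, Finset.card_singleton]
    · simpa using fun h : v = w => hw.2 h.symm
    · simp [huv, hw.1, Ne.symm hw.1]
  have hteq : t = {u, v, w} := (Finset.eq_of_subset_of_card_le hsub (by omega)).symm
  exact ⟨w, hw.1, hw.2, hteq, ht.1 hu hv huv, ht.1 hu hwt (Ne.symm hw.1),
    ht.1 hv hwt (Ne.symm hw.2)⟩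

lemma K4_of (hK4 : ¬ containsCopy (⊤ : SimpleGraph (Fin 4)) G) {a b c d : V}
    (hab : G.Adj a b) (hac : G.Adj a c) (had : G.Adj a d) (hbc : G.Adj b c)
    (hbd : G.Adj b d) (hcd : G.Adj c d) : False := by
  apply hK4
  refine ⟨⟨![a, b, c, d], ?_⟩, ?_⟩
  · intro i j hij
    have hne : i ≠ j := hij.ne
    fin_cases i <;> fin_cases j <;> simp_all <;>
      first
        | exact hab | exact hac | exact had | exact hbc | exact hbd | exact hcd
        | exact hab.symm | exact hac.symm | exact had.symm | exact hbc.symm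
        | exact hbd.symm | exact hcd.symm
  · have d1 := hab.ne; have d2 := hac.ne; have d3 := had.ne
    have d4 := hbc.ne; have d5 := hbd.ne; have d6 := hcd.ne
    show Function.Injective ![a, b, c, d]
    intro i j hij
    fin_cases i <;> fin_cases j <;> simp_all

lemma P3_of (hP3 : ¬ containsCopy (susp (SimpleGraph.pathGraph 4)) G) {a p0 p1 p2 p3 : V}
    (h0 : G.Adj a p0) (h1 : G.Adj a p1) (h2 : G.Adj a p2) (h3 : G.Adj a p3)
    (e01 : G.Adj p0 p1) (e12 : G.Adj p1 p2) (e23 : G.Adj p2 p3)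
    (d02 : p0 ≠ p2) (d03 : p0 ≠ p3) (d13 : p1 ≠ p3) : False := by
  apply hP3
  refine ⟨⟨fun o => Option.rec a (fun i => ![p0, p1, p2, p3] i) o, ?_⟩, ?_⟩
  · rintro (_ | i) (_ | j) hij
    · exact absurd hij (by simp [susp])
    · show G.Adj a (![p0, p1, p2, p3] j)
      fin_cases j <;> simp_all
    · show G.Adj (![p0, p1, p2, p3] i) a
      fin_cases i <;> simp_all [SimpleGraph.adj_comm]
    · show G.Adj (![p0, p1, p2, p3] i) (![p0, p1, p2, p3] j)
      have hadj : (SimpleGraph.pathGraph 4).Adj i j := hij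
      rw [SimpleGraph.pathGraph_adj] at hadj
      fin_cases i <;> fin_cases j <;> simp_all [SimpleGraph.adj_comm]
  · have n0 := h0.ne; have n1 := h1.ne; have n2 := h2.ne; have n3 := h3.ne
    have m01 := e01.ne; have m12 := e12.ne; have m23 := e23.ne
    rintro (_ | i) (_ | j) hij
    · rfl
    · exfalso
      have : a = ![p0, p1, p2, p3] j := hij
      fin_cases j <;> simp_all
    · exfalso
      have : ![p0, p1, p2, p3] i = a := hij
      fin_cases i <;> simp_all
    · have : ![p0, p1, p2, p3] i = ![p0, p1, p2, p3] j := hij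
      congr 1
      fin_cases i <;> fin_cases j <;> simp_all

lemma page_step [Fintype V] (hP3 : ¬ containsCopy (susp (SimpleGraph.pathGraph 4)) G)
    (hK4 : ¬ containsCopy (⊤ : SimpleGraph (Fin 4)) G) {u v w x : V}
    (huv : G.Adj u v) (huw : G.Adj u w) (hvw : G.Adj v w)
    (hux : G.Adj u x) (hwx : G.Adj w x)
    (hmax : codeg G u w ≤ codeg G u v) : x = v := by
  by_contra hxv
  by_cases hvx : G.Adj v x
  · exact K4_of hK4 huv huw hux hvw hvx hwx
  · have h2 : 2 ≤ codeg G u w := by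
      have hsub : ({v, x} : Set V) ⊆ G.neighborSet u ∩ G.neighborSet w := by
        rintro y (rfl | hy)
        · exact ⟨huv, hvw.symm⟩
        · rcases hy with rfl
          exact ⟨hux, hwx⟩
      have := Set.ncard_le_ncard hsub (Set.toFinite _)
      rwa [Set.ncard_pair (Ne.symm hxv)] at this
    have h2' : 2 ≤ codeg G u v := le_trans h2 hmax
    obtain ⟨w', hw'S, hw'w⟩ :
        ∃ w', w' ∈ G.neighborSet u ∩ G.neighborSet v ∧ w' ≠ w := by
      obtain ⟨p, hp, q, hq, hpq⟩ := (Set.one_lt_ncard (Set.toFinite _)).1 h2'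
      by_cases hpw : p = w
      · exact ⟨q, hq, by rw [← hpw]; exact fun h => hpq h.symm⟩
      · exact ⟨p, hp, hpw⟩
    have hvw' : G.Adj v w' := hw'S.2
    have hw'x : w' ≠ x := by
      intro h
      exact hvx (h ▸ hvw')
    exact P3_of hP3 hw'S.1 huv huw hux hvw'.symm hvw hwx hw'w hw'x (fun h => hxv h.symm)

end Helpers

section Block
variable {V : Type*} {G : SimpleGraph V}

lemma book_mem {u v : V} {S : Set V} {g : Sym2 V} :
    g ∈ ({s(u, v)} ∪ ⋃ w ∈ S, ({s(u, w), s(v, w)} : Set (Sym2 V))) ↔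
      g = s(u, v) ∨ ∃ w ∈ S, g = s(u, w) ∨ g = s(v, w) := by
  simp [Set.mem_union, Set.mem_iUnion]

lemma block_book [Fintype V] (hP3 : ¬ containsCopy (susp (SimpleGraph.pathGraph 4)) G)
    (hK4 : ¬ containsCopy (⊤ : SimpleGraph (Fin 4)) G)
    (hTri : ∀ e ∈ G.edgeSet, ∃ t : Finset V, G.IsNClique 3 t ∧
      ∃ x ∈ t, ∃ y ∈ t, x ≠ y ∧ e = s(x, y))
    {e : Sym2 V} (he : e ∈ G.edgeSet) :
    ∃ (u v : V) (S : Set V), G.Adj u v ∧ S.Nonempty ∧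
      u ∉ S ∧ v ∉ S ∧ (∀ w ∈ S, G.Adj u w ∧ G.Adj v w) ∧
      {e' | e' ∈ G.edgeSet ∧ Relation.ReflTransGen (triShare G) e e'} =
        {s(u, v)} ∪ ⋃ w ∈ S, {s(u, w), s(v, w)} := by
  classical
  set C := {e' | e' ∈ G.edgeSet ∧ Relation.ReflTransGen (triShare G) e e'} with hCdef
  have heC : e ∈ C := ⟨he, Relation.ReflTransGen.refl⟩
  have hCE : C ⊆ G.edgeSet := fun g hg => hg.1
  have hCfin : C.Finite := Set.Finite.subset (Set.toFinite _) hCE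
  set cd : Sym2 V → ℕ :=
    Sym2.lift ⟨fun a b => codeg G a b, fun a b => by simp [codeg, Set.inter_comm]⟩
    with hcd
  obtain ⟨f, hfC, hfmax⟩ := Set.exists_max_image C cd hCfin ⟨e, heC⟩
  obtain ⟨u, v, rfl⟩ : ∃ u v, f = s(u, v) := by
    induction f using Sym2.ind with | _ u v => exact ⟨u, v, rfl⟩
  have huv : G.Adj u v := (G.mem_edgeSet).1 (hCE hfC)
  set S := (G.neighborSet u ∩ G.neighborSet v : Set V) with hSdef
  -- S nonempty
  obtain ⟨t0, ht0, x, hx, y, hy, hxy, hexy⟩ := hTri s(u, v) (hCE hfC)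
  have hut0 : u ∈ t0 ∧ v ∈ t0 := by
    rcases Sym2.eq_iff.1 hexy with ⟨rfl, rfl⟩ | ⟨rfl, rfl⟩
    · exact ⟨hx, hy⟩
    · exact ⟨hy, hx⟩
  obtain ⟨w0, _, _, _, _, huw0, hvw0⟩ := tri_struct ht0 hut0.1 hut0.2 huv.ne
  have hSne : S.Nonempty := ⟨w0, huw0, hvw0⟩
  have huS : u ∉ S := fun h => G.loopless.irrefl u h.1
  have hvS : v ∉ S := fun h => G.loopless.irrefl v h.2
  set B := ({s(u, v)} ∪ ⋃ w ∈ S, {s(u, w), s(v, w)} : Set (Sym2 V)) with hBdef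
  have tri_uvw : ∀ w ∈ S, G.IsNClique 3 ({u, v, w} : Finset V) := by
    intro w hw
    exact SimpleGraph.is3Clique_triple_iff.2 ⟨huv, hw.1, hw.2⟩
  have hBC : B ⊆ C := by
    intro g hg
    rcases book_mem.1 hg with rfl | ⟨w, hw, hg'⟩
    · exact hfC
    · have hshare : ∀ p ∈ ({u, v, w} : Finset V), ∀ q ∈ ({u, v, w} : Finset V), p ≠ q →
          triShare G s(u, v) s(p, q) := by
        intro p hp q hq hpq
        exact ⟨{u, v, w}, tri_uvw w hw,
          ⟨u, by simp, v, by simp, huv.ne, rfl⟩, ⟨p, hp, q, hq, hpq, rfl⟩⟩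
      have hneuw : u ≠ w := fun h => huS (h ▸ hw)
      have hnevw : v ≠ w := fun h => hvS (h ▸ hw)
      rcases hg' with rfl | rfl
      · exact ⟨(G.mem_edgeSet).2 hw.1,
          hfC.2.trans (Relation.ReflTransGen.single (hshare u (by simp) w (by simp) hneuw))⟩
      · exact ⟨(G.mem_edgeSet).2 hw.2,
          hfC.2.trans (Relation.ReflTransGen.single (hshare v (by simp) w (by simp) hnevw))⟩
  have hedge : ∀ w ∈ S, ∀ p ∈ ({u, v, w} : Finset V), ∀ q ∈ ({u, v, w} : Finset V),
      p ≠ q → s(p, q) ∈ B := by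
    intro w hwS p hp q hq hpq
    simp only [Finset.mem_insert, Finset.mem_singleton] at hp hq
    rcases hp with rfl | rfl | rfl <;> rcases hq with rfl | rfl | rfl <;>
      first
        | exact absurd rfl hpq
        | exact book_mem.2 (Or.inl rfl)
        | exact book_mem.2 (Or.inl Sym2.eq_swap)
        | exact book_mem.2 (Or.inr ⟨q, hwS, Or.inl rfl⟩)
        | exact book_mem.2 (Or.inr ⟨p, hwS, Or.inl Sym2.eq_swap⟩)
        | exact book_mem.2 (Or.inr ⟨q, hwS, Or.inr rfl⟩)
        | exact book_mem.2 (Or.inr ⟨p, hwS, Or.inr Sym2.eq_swap⟩)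
  have hclosure : ∀ b c, b ∈ B → triShare G b c → c ∈ B := by
    intro b c hbB hbc
    obtain ⟨t, ht, ⟨x1, hx1, y1, hy1, hxy1, hb⟩, ⟨x2, hx2, y2, hy2, hxy2, hc⟩⟩ := hbc
    rcases book_mem.1 hbB with hb' | ⟨w, hwS, hb'⟩
    · -- b = s(u,v)
      have huvt : u ∈ t ∧ v ∈ t := by
        rcases Sym2.eq_iff.1 (hb'.symm.trans hb) with ⟨rfl, rfl⟩ | ⟨rfl, rfl⟩
        · exact ⟨hx1, hy1⟩
        · exact ⟨hy1, hx1⟩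
      obtain ⟨w1, _, _, hteq, _, huw1, hvw1⟩ := tri_struct ht huvt.1 huvt.2 huv.ne
      subst hteq
      exact hc ▸ hedge w1 ⟨huw1, hvw1⟩ x2 hx2 y2 hy2 hxy2
    · have hneuw : u ≠ w := fun h => huS (h ▸ hwS)
      have hnevw : v ≠ w := fun h => hvS (h ▸ hwS)
      have hswap : ({u, w, v} : Finset V) = {u, v, w} := by ext a; simp; tauto
      have hswap' : ({v, w, u} : Finset V) = {u, v, w} := by ext a; simp; tauto
      rcases hb' with rfl | rfl
      · -- b = s(u,w)
        have huwt : u ∈ t ∧ w ∈ t := by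
          rcases Sym2.eq_iff.1 hb.symm with ⟨rfl, rfl⟩ | ⟨rfl, rfl⟩
          · exact ⟨hx1, hy1⟩
          · exact ⟨hy1, hx1⟩
        obtain ⟨z, _, _, hteq, _, huz, hwz⟩ := tri_struct ht huwt.1 huwt.2 hneuw
        have hmax' : codeg G u w ≤ codeg G u v := by
          have hmem : s(u, w) ∈ C :=
            hBC (book_mem.2 (Or.inr ⟨w, hwS, Or.inl rfl⟩))
          have := hfmax _ hmem
          simpa [hcd, Sym2.lift_mk] using this
        have hzv : z = v := page_step hP3 hK4 huv hwS.1 hwS.2 huz hwz hmax'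
        subst hzv; subst hteq
        exact hc ▸ (hswap ▸ hedge w hwS) x2 hx2 y2 hy2 hxy2
      · -- b = s(v,w)
        have hvwt : v ∈ t ∧ w ∈ t := by
          rcases Sym2.eq_iff.1 hb.symm with ⟨rfl, rfl⟩ | ⟨rfl, rfl⟩
          · exact ⟨hx1, hy1⟩
          · exact ⟨hy1, hx1⟩
        obtain ⟨z, _, _, hteq, _, hvz, hwz⟩ := tri_struct ht hvwt.1 hvwt.2 hnevw
        have hmax' : codeg G v w ≤ codeg G v u := by
          have hmem : s(v, w) ∈ C :=
            hBC (book_mem.2 (Or.inr ⟨w, hwS, Or.inr rfl⟩))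
          have h1 := hfmax _ hmem
          have h2 : codeg G v u = codeg G u v := by unfold codeg; rw [Set.inter_comm]
          rw [h2]
          simpa [hcd, Sym2.lift_mk] using h1
        have hzu : z = u := page_step hP3 hK4 huv.symm hwS.2 hwS.1 hvz hwz hmax'
        subst hzu; subst hteq
        exact hc ▸ (hswap' ▸ hedge w hwS) x2 hx2 y2 hy2 hxy2
  have hCB : C ⊆ B := by
    have haux : ∀ g, Relation.ReflTransGen (triShare G) s(u, v) g → g ∈ B := by
      intro g hfg
      induction hfg with
      | refl => exact book_mem.2 (Or.inl rfl)
      | tail h1 h2 ih => exact hclosure _ _ ih h2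
    intro g hg
    exact haux g (((by haveI : Std.Symm (triShare G) := ⟨fun a b h => triShare_symm h⟩; exact Std.Symm.symm _ _ hfC.2) : Relation.ReflTransGen (triShare G) s(u, v) e).trans hg.2)
  exact ⟨u, v, S, huv, hSne, huS, hvS, fun w hw => ⟨hw.1, hw.2⟩,
    Set.Subset.antisymm hCB hBC⟩
end Block

theorem triangle_blocks_are_books' {V : Type*} [Fintype V] (G : SimpleGraph V)
    (hP3 : ¬ containsCopy (susp (SimpleGraph.pathGraph 4)) G)
    (hK4 : ¬ containsCopy (⊤ : SimpleGraph (Fin 4)) G)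
    (hTri : ∀ e ∈ G.edgeSet, ∃ t : Finset V, G.IsNClique 3 t ∧
      ∃ x ∈ t, ∃ y ∈ t, x ≠ y ∧ e = s(x, y))
    (hNe : G.edgeSet.Nonempty) :
    (∀ e ∈ G.edgeSet, ∃ (u v : V) (S : Set V), G.Adj u v ∧ S.Nonempty ∧
        u ∉ S ∧ v ∉ S ∧ (∀ w ∈ S, G.Adj u w ∧ G.Adj v w) ∧
        {e' | e' ∈ G.edgeSet ∧ Relation.ReflTransGen (triShare G) e e'} =
          {s(u, v)} ∪ ⋃ w ∈ S, {s(u, w), s(v, w)})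
    ∧ 2 * triCount G < edgeCount G := by
  classical
  have part1 : ∀ e ∈ G.edgeSet, ∃ (u v : V) (S : Set V), G.Adj u v ∧ S.Nonempty ∧
      u ∉ S ∧ v ∉ S ∧ (∀ w ∈ S, G.Adj u w ∧ G.Adj v w) ∧
      {e' | e' ∈ G.edgeSet ∧ Relation.ReflTransGen (triShare G) e e'} =
        {s(u, v)} ∪ ⋃ w ∈ S, {s(u, w), s(v, w)} :=
    fun e he => block_book hP3 hK4 hTri he
  refine ⟨part1, ?_⟩
  obtain ⟨e0, he0⟩ := hNe
  have hV : Nonempty V := by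
    induction e0 using Sym2.ind with | _ a b => exact ⟨a⟩
  set comp : Sym2 V → Set (Sym2 V) :=
    fun g => {e' | e' ∈ G.edgeSet ∧ Relation.ReflTransGen (triShare G) g e'} with hcompdef
  have hcc : ∀ g g', g' ∈ comp g → comp g' = comp g := fun g g' h => comp_congr h
  set Q : Set (Sym2 V) → V × V × Set V → Prop := fun C p =>
    G.Adj p.1 p.2.1 ∧ p.2.2.Nonempty ∧ p.1 ∉ p.2.2 ∧ p.2.1 ∉ p.2.2 ∧
    (∀ w ∈ p.2.2, G.Adj p.1 w ∧ G.Adj p.2.1 w) ∧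
    C = {s(p.1, p.2.1)} ∪ ⋃ w ∈ p.2.2, {s(p.1, w), s(p.2.1, w)} with hQdef
  have hQex : ∀ g ∈ G.edgeSet, ∃ p, Q (comp g) p := by
    intro g hg
    obtain ⟨u, v, S, h1, h2, h3, h4, h5, h6⟩ := part1 g hg
    exact ⟨(u, v, S), h1, h2, h3, h4, h5, h6⟩
  obtain ⟨pick, hpick⟩ : ∃ pick : Set (Sym2 V) → V × V × Set V,
      ∀ C, (∃ p, Q C p) → Q C (pick C) := by
    refine ⟨fun C => if h : ∃ p, Q C p then h.choose else Classical.arbitrary _,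
      fun C h => ?_⟩
    simp only [dif_pos h]
    exact h.choose_spec
  have key : ∀ t : Finset V, G.IsNClique 3 t → ∃ (D : Set (Sym2 V)) (w : V),
      (∃ p, Q D p) ∧ w ∈ (pick D).2.2 ∧ t = {(pick D).1, (pick D).2.1, w} ∧
      (∀ x ∈ t, ∀ y ∈ t, x ≠ y → comp s(x, y) = D) := by
    intro t ht
    obtain ⟨a, b, c, hab, hac, hbc, hteq⟩ := SimpleGraph.is3Clique_iff.1 ht
    have habE : s(a, b) ∈ G.edgeSet := hab
    have hQD : ∃ p, Q (comp s(a, b)) p := hQex _ habE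
    set D := comp s(a, b) with hD
    have hp := hpick D hQD
    have hmemD : ∀ x ∈ t, ∀ y ∈ t, x ≠ y → s(x, y) ∈ D := by
      intro x hx y hy hxy
      refine ⟨(G.mem_edgeSet).2 (ht.1 hx hy hxy), Relation.ReflTransGen.single ?_⟩
      exact ⟨t, ht, ⟨a, by simp [hteq], b, by simp [hteq], hab.ne, rfl⟩,
        ⟨x, hx, y, hy, hxy, rfl⟩⟩
    have hcompall : ∀ x ∈ t, ∀ y ∈ t, x ≠ y → comp s(x, y) = D :=
      fun x hx y hy hxy => hcc _ _ (hmemD x hx y hy hxy)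
    set u := (pick D).1 with hu
    set v := (pick D).2.1 with hv
    set S := (pick D).2.2 with hS
    have hadj : G.Adj u v := hp.1
    have huS : u ∉ S := hp.2.2.1
    have hvS : v ∉ S := hp.2.2.2.1
    have hBook : D = {s(u, v)} ∪ ⋃ w ∈ S, {s(u, w), s(v, w)} := hp.2.2.2.2.2
    have contains : ∀ x ∈ t, ∀ y ∈ t, x ≠ y → x = u ∨ y = u ∨ x = v ∨ y = v := by
      intro x hx y hy hxy
      have hmem := hmemD x hx y hy hxy
      rw [hBook] at hmem
      rcases book_mem.1 hmem with heq | ⟨w', hw', heq | heq⟩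
      · rcases Sym2.eq_iff.1 heq with ⟨rfl, rfl⟩ | ⟨rfl, rfl⟩
        · exact Or.inl rfl
        · exact Or.inr (Or.inr (Or.inl rfl))
      · rcases Sym2.eq_iff.1 heq with ⟨rfl, _⟩ | ⟨_, rfl⟩
        · exact Or.inl rfl
        · exact Or.inr (Or.inl rfl)
      · rcases Sym2.eq_iff.1 heq with ⟨rfl, _⟩ | ⟨_, rfl⟩
        · exact Or.inr (Or.inr (Or.inl rfl))
        · exact Or.inr (Or.inr (Or.inr rfl))
    have hat : a ∈ t := by simp [hteq]
    have hbt : b ∈ t := by simp [hteq]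
    have hct : c ∈ t := by simp [hteq]
    have hvt_of : ∀ z, z ∉ t → v ∈ t → True := fun _ _ _ => trivial
    have hu_t : u ∈ t := by
      by_contra hu_t
      have hne : ∀ x ∈ t, x ≠ u := fun x hx h => hu_t (h ▸ hx)
      have hA : a = v ∨ b = v := by
        rcases contains a hat b hbt hab.ne with h | h | h | h
        · exact absurd h (hne a hat)
        · exact absurd h (hne b hbt)
        · exact Or.inl h
        · exact Or.inr h
      have hB : a = v ∨ c = v := by
        rcases contains a hat c hct hac.ne with h | h | h | h
        · exact absurd h (hne a hat)
        · exact absurd h (hne c hct)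
        · exact Or.inl h
        · exact Or.inr h
      have hC : b = v ∨ c = v := by
        rcases contains b hbt c hct hbc.ne with h | h | h | h
        · exact absurd h (hne b hbt)
        · exact absurd h (hne c hct)
        · exact Or.inl h
        · exact Or.inr h
      rcases hA with h | h
      · rcases hC with h' | h'
        · exact hab.ne (h.trans h'.symm)
        · exact hac.ne (h.trans h'.symm)
      · rcases hB with h' | h'
        · exact hab.ne (h'.trans h.symm)
        · exact hbc.ne (h.trans h'.symm)
    have hv_t : v ∈ t := by
      by_contra hv_t
      have hne : ∀ x ∈ t, x ≠ v := fun x hx h => hv_t (h ▸ hx)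
      have hA : a = u ∨ b = u := by
        rcases contains a hat b hbt hab.ne with h | h | h | h
        · exact Or.inl h
        · exact Or.inr h
        · exact absurd h (hne a hat)
        · exact absurd h (hne b hbt)
      have hB : a = u ∨ c = u := by
        rcases contains a hat c hct hac.ne with h | h | h | h
        · exact Or.inl h
        · exact Or.inr h
        · exact absurd h (hne a hat)
        · exact absurd h (hne c hct)
      have hC : b = u ∨ c = u := by
        rcases contains b hbt c hct hbc.ne with h | h | h | h
        · exact Or.inl h
        · exact Or.inr h
        · exact absurd h (hne b hbt)
        · exact absurd h (hne c hct)
      rcases hA with h | h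
      · rcases hC with h' | h'
        · exact hab.ne (h.trans h'.symm)
        · exact hac.ne (h.trans h'.symm)
      · rcases hB with h' | h'
        · exact hab.ne (h'.trans h.symm)
        · exact hbc.ne (h.trans h'.symm)
    obtain ⟨w, hwu, hwv, hteq2, _, huw, hvw⟩ := tri_struct ht hu_t hv_t hadj.ne
    have hwt : w ∈ t := by simp [hteq2]
    have hwS : w ∈ S := by
      have hmem := hmemD u hu_t w hwt (fun h => hwu h.symm)
      rw [hBook] at hmem
      rcases book_mem.1 hmem with heq | ⟨w', hw', heq | heq⟩
      · rcases Sym2.eq_iff.1 heq with ⟨_, h⟩ | ⟨h, _⟩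
        · exact absurd h hwv
        · exact absurd h hadj.ne
      · rcases Sym2.eq_iff.1 heq with ⟨_, h⟩ | ⟨h, _⟩
        · rw [h]; exact hw'
        · exact absurd (by rw [h]; exact hw' : u ∈ S) huS
      · rcases Sym2.eq_iff.1 heq with ⟨h, _⟩ | ⟨h, _⟩
        · exact absurd h hadj.ne
        · exact absurd (by rw [h]; exact hw' : u ∈ S) huS
    exact ⟨D, w, hQD, hwS, hteq2, hcompall⟩
  choose! D w hQD hwS hteqD hcompD using key
  -- the special block of e0
  have hQ0 : ∃ p, Q (comp e0) p := hQex _ he0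
  have hp0 := hpick (comp e0) hQ0
  set σ : Sym2 V := s((pick (comp e0)).1, (pick (comp e0)).2.1) with hσ
  have hσE : σ ∈ G.edgeSet := hp0.1
  have hσmem : σ ∈ comp e0 := by
    rw [hp0.2.2.2.2.2]
    exact book_mem.2 (Or.inl rfl)
  have hcompσ : comp σ = comp e0 := hcc _ _ hσmem
  -- the two injections
  set Tset := {s : Finset V | G.IsNClique 3 s} with hTset
  set Φu : Finset V → Sym2 V := fun t => s((pick (D t)).1, w t) with hΦu
  set Φv : Finset V → Sym2 V := fun t => s((pick (D t)).2.1, w t) with hΦv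
  have facts : ∀ t ∈ Tset, G.Adj (pick (D t)).1 (pick (D t)).2.1 ∧
      (pick (D t)).1 ∉ (pick (D t)).2.2 ∧ (pick (D t)).2.1 ∉ (pick (D t)).2.2 ∧
      G.Adj (pick (D t)).1 (w t) ∧ G.Adj (pick (D t)).2.1 (w t) ∧
      comp (Φu t) = D t ∧ comp (Φv t) = D t := by
    intro t ht
    have hpt := hpick (D t) (hQD t ht)
    have hwSt := hwS t ht
    have h1 : (pick (D t)).1 ∉ (pick (D t)).2.2 := hpt.2.2.1
    have h2 : (pick (D t)).2.1 ∉ (pick (D t)).2.2 := hpt.2.2.2.1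
    have hadjw := hpt.2.2.2.2.1 (w t) hwSt
    have hut : (pick (D t)).1 ∈ t := by
      have h := hteqD t ht
      have : (pick (D t)).1 ∈ ({(pick (D t)).1, (pick (D t)).2.1, w t} : Finset V) := by simp
      rwa [← h] at this
    have hvt : (pick (D t)).2.1 ∈ t := by
      have h := hteqD t ht
      have : (pick (D t)).2.1 ∈ ({(pick (D t)).1, (pick (D t)).2.1, w t} : Finset V) := by simp
      rwa [← h] at this
    have hwt : w t ∈ t := by
      have h := hteqD t ht
      have : w t ∈ ({(pick (D t)).1, (pick (D t)).2.1, w t} : Finset V) := by simp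
      rwa [← h] at this
    have hne1 : (pick (D t)).1 ≠ w t := fun h => h1 (h ▸ hwSt)
    have hne2 : (pick (D t)).2.1 ≠ w t := fun h => h2 (h ▸ hwSt)
    exact ⟨hpt.1, h1, h2, hadjw.1, hadjw.2,
      hcompD t ht _ hut _ hwt hne1, hcompD t ht _ hvt _ hwt hne2⟩
  have hmapsU : ∀ t ∈ Tset, Φu t ∈ G.edgeSet \ {σ} := by
    intro t ht
    obtain ⟨hadj, h1, h2, hu1, hv1, hcu, hcv⟩ := facts t ht
    refine ⟨hu1, ?_⟩
    intro hmem
    have heq : Φu t = σ := hmem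
    have hDeq : D t = comp e0 := by rw [← hcu, heq, hcompσ]
    rw [hDeq] at h2
    have := hwS t ht
    rw [hDeq] at this
    have heq2 : s((pick (comp e0)).1, w t) = s((pick (comp e0)).1, (pick (comp e0)).2.1) := by
      simpa [hΦu, hDeq, hσ] using heq
    rcases Sym2.eq_iff.1 heq2 with ⟨_, h⟩ | ⟨h, h'⟩
    · exact h2 (h ▸ this)
    · exact hp0.1.ne h
  have hmapsV : ∀ t ∈ Tset, Φv t ∈ G.edgeSet \ {σ} := by
    intro t ht
    obtain ⟨hadj, h1, h2, hu1, hv1, hcu, hcv⟩ := facts t ht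
    refine ⟨hv1, ?_⟩
    intro hmem
    have heq : Φv t = σ := hmem
    have hDeq : D t = comp e0 := by rw [← hcv, heq, hcompσ]
    rw [hDeq] at h2
    have hwmem := hwS t ht
    rw [hDeq] at hwmem
    have heq2 : s((pick (comp e0)).2.1, w t) = s((pick (comp e0)).1, (pick (comp e0)).2.1) := by
      simpa [hΦv, hDeq, hσ] using heq
    rcases Sym2.eq_iff.1 heq2 with ⟨h, h'⟩ | ⟨_, h⟩
    · exact hp0.1.ne h.symm
    · rw [hDeq] at h1
      exact h1 (h ▸ hwmem)
  have hinjU : Set.InjOn Φu Tset := by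
    intro t ht t' ht' heq
    obtain ⟨_, h1, _, _, _, hcu, _⟩ := facts t ht
    obtain ⟨_, h1', _, _, _, hcu', _⟩ := facts t' ht'
    have hDeq : D t = D t' := by rw [← hcu, heq, hcu']
    have heq2 : s((pick (D t')).1, w t) = s((pick (D t')).1, w t') := by
      simpa [hΦu, hDeq] using heq
    rcases Sym2.eq_iff.1 heq2 with ⟨_, hww⟩ | ⟨hx, hy⟩
    · rw [hteqD t ht, hteqD t' ht', hDeq, hww]
    · exfalso
      rw [hDeq] at h1
      exact h1 (hx ▸ hwS t' ht')
  have hinjV : Set.InjOn Φv Tset := by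
    intro t ht t' ht' heq
    obtain ⟨_, _, h2, _, _, _, hcv⟩ := facts t ht
    obtain ⟨_, _, h2', _, _, _, hcv'⟩ := facts t' ht'
    have hDeq : D t = D t' := by rw [← hcv, heq, hcv']
    have heq2 : s((pick (D t')).2.1, w t) = s((pick (D t')).2.1, w t') := by
      simpa [hΦv, hDeq] using heq
    rcases Sym2.eq_iff.1 heq2 with ⟨_, hww⟩ | ⟨hx, hy⟩
    · rw [hteqD t ht, hteqD t' ht', hDeq, hww]
    · exfalso
      rw [hDeq] at h2
      exact h2 (hx ▸ hwS t' ht')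
  have hdisj : Disjoint (Φu '' Tset) (Φv '' Tset) := by
    rw [Set.disjoint_left]
    rintro g ⟨t, ht, rfl⟩ ⟨t', ht', heq⟩
    obtain ⟨hadj, h1, _, _, _, hcu, _⟩ := facts t ht
    obtain ⟨_, _, _, _, _, _, hcv'⟩ := facts t' ht'
    have hDeq : D t' = D t := by rw [← hcv', heq, hcu]
    have heq2 : s((pick (D t)).2.1, w t') = s((pick (D t)).1, w t) := by
      simpa [hΦu, hΦv, hDeq] using heq
    rcases Sym2.eq_iff.1 heq2 with ⟨h, _⟩ | ⟨_, h⟩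
    · exact hadj.ne h.symm
    · have hh := hwS t' ht'
      rw [hDeq] at hh
      rw [h] at hh
      exact h1 hh
  have hTfin : Tset.Finite := Set.toFinite _
  have hEfin : G.edgeSet.Finite := Set.toFinite _
  have hsubE : (Φu '' Tset) ∪ (Φv '' Tset) ⊆ G.edgeSet \ {σ} := by
    rintro g (⟨t, ht, rfl⟩ | ⟨t, ht, rfl⟩)
    · exact hmapsU t ht
    · exact hmapsV t ht
  have h1 : (Φu '' Tset).ncard = Tset.ncard := Set.ncard_image_of_injOn hinjU
  have h2 : (Φv '' Tset).ncard = Tset.ncard := Set.ncard_image_of_injOn hinjV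
  have hun : ((Φu '' Tset) ∪ (Φv '' Tset)).ncard = Tset.ncard + Tset.ncard := by
    rw [Set.ncard_union_eq hdisj (hTfin.image _) (hTfin.image _), h1, h2]
  have hle : ((Φu '' Tset) ∪ (Φv '' Tset)).ncard ≤ (G.edgeSet \ {σ}).ncard :=
    Set.ncard_le_ncard hsubE hEfin.diff
  have hdd : (G.edgeSet \ {σ}).ncard = G.edgeSet.ncard - 1 :=
    Set.ncard_diff_singleton_of_mem hσE
  have hpos : 0 < G.edgeSet.ncard := (Set.ncard_pos hEfin).2 ⟨σ, hσE⟩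
  have hgoal : triCount G = Tset.ncard := rfl
  have hgoal2 : edgeCount G = G.edgeSet.ncard := rfl
  rw [hgoal, hgoal2]
  omega

/-- In a `\widehat{P}_3`-free, `K_4`-free graph in which every edge lies in a
triangle, every triangle block is a book `B_s` (`s ≥ 1`), and `t(G) < e(G)/2`. -/
theorem triangle_blocks_are_books {V : Type*} [Fintype V] (G : SimpleGraph V)
    (hP3 : ¬ containsCopy (susp (pathGraph 4)) G)
    (hK4 : ¬ containsCopy (⊤ : SimpleGraph (Fin 4)) G)
    (hTri : ∀ e ∈ G.edgeSet, ∃ t : Finset V, G.IsNClique 3 t ∧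
      ∃ x ∈ t, ∃ y ∈ t, x ≠ y ∧ e = s(x, y))
    (hNe : G.edgeSet.Nonempty) :
    (∀ e ∈ G.edgeSet, ∃ (u v : V) (S : Set V), G.Adj u v ∧ S.Nonempty ∧
        u ∉ S ∧ v ∉ S ∧ (∀ w ∈ S, G.Adj u w ∧ G.Adj v w) ∧
        {e' | e' ∈ G.edgeSet ∧ Relation.ReflTransGen (triShare G) e e'} =
          {s(u, v)} ∪ ⋃ w ∈ S, {s(u, w), s(v, w)})
    ∧ 2 * triCount G < edgeCount G := by
  exact triangle_blocks_are_books' G hP3 hK4 hTri hNe
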